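/- arXiv:2411.02593 — 3 statements merged into one kernel-verified Lean document; each statement's English description precedes it below -/
import Mathlib

section
/- Let (a_n, b_n)_{n≥1} be a sequence of pairs with 0 < a_n < b_n ≤ 1, the a_n pairwise distinct, lim_{n→∞}(b_n − a_n) = 0, and {a_n : n ≥ 1} dense in [0,1]. Let X_∞ ⊆ [0,1]^ℕ be the comb inverse limit associated to the full family (a_n,b_n)_{n≥1}, and for each m ≥ 1 let D_m ⊆ [0,1]^ℕ be the comb inverse limit associated to the finite family (a_n,b_n)_{n=1}^m. Then X_∞ equals the closure in [0,1]^ℕ of the union ⋃_{m≥1} D_m. -/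
open Filter

/-- The comb inverse limit associated to the family of pairs `(a i, b i)`, `i ∈ I`. -/
def combSet (I : Set ℕ) (a b : ℕ → ℝ) : Set (ℕ → ℝ) :=
  {x | (∀ k, x k ∈ Set.Icc (0 : ℝ) 1) ∧
    ∀ k, x k = x (k + 1) ∨ ∃ i ∈ I, x (k + 1) ∈ Set.Icc (a i) (b i) ∧ x k = a i}

/-- The full comb inverse limit is the closure of the union of the finite ones. -/
theorem stmt10 (a b : ℕ → ℝ)
    (hab : ∀ n, 1 ≤ n → 0 < a n ∧ a n < b n ∧ b n ≤ 1)
    (hdist : ∀ m n, 1 ≤ m → 1 ≤ n → m ≠ n → a m ≠ a n)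
    (hlim : Tendsto (fun n => b n - a n) atTop (nhds 0))
    (hdense : Set.Icc (0 : ℝ) 1 ⊆ closure {t : ℝ | ∃ n, 1 ≤ n ∧ a n = t}) :
    combSet {n | 1 ≤ n} a b =
      closure (⋃ m ∈ {m : ℕ | 1 ≤ m}, combSet {n | 1 ≤ n ∧ n ≤ m} a b) := by
  classical
  apply Set.Subset.antisymm
  · -- ⊆ : approximate by truncations with constant tail
    intro x hx
    obtain ⟨hx1, hx2⟩ := hx
    set f : ℕ → ℕ := fun k =>
      if h : ∃ i, 1 ≤ i ∧ x (k + 1) ∈ Set.Icc (a i) (b i) ∧ x k = a i then h.choose else 1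
      with hfdef
    set y : ℕ → ℕ → ℝ := fun N k => if k ≤ N then x k else x N with hydef
    have hy : ∀ N, y N ∈ ⋃ m ∈ {m : ℕ | 1 ≤ m}, combSet {n | 1 ≤ n ∧ n ≤ m} a b := by
      intro N
      refine Set.mem_biUnion (t := fun m => combSet {n | 1 ≤ n ∧ n ≤ m} a b)
        (show max 1 ((Finset.range N).sup f) ∈ {m : ℕ | 1 ≤ m} from (le_max_left 1 _ : 1 ≤ max 1 ((Finset.range N).sup f))) ?_
      constructor
      · intro k
        simp only [hydef]
        split <;> exact hx1 _
      · intro k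
        rcases lt_or_ge k N with hk | hk
        · have hk1 : k ≤ N := hk.le
          have hk2 : k + 1 ≤ N := hk
          simp only [hydef, if_pos hk1, if_pos hk2]
          rcases hx2 k with h | h
          · exact Or.inl h
          · right
            obtain ⟨i, hi, h1, h2⟩ := h
            have hex : ∃ i, 1 ≤ i ∧ x (k + 1) ∈ Set.Icc (a i) (b i) ∧ x k = a i :=
              ⟨i, hi, h1, h2⟩
            have hfk : f k = hex.choose := by simp only [hfdef, dif_pos hex]
            refine ⟨f k, ⟨?_, ?_⟩, ?_, ?_⟩
            · rw [hfk]; exact hex.choose_spec.1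
            · exact le_max_of_le_right (Finset.le_sup (Finset.mem_range.mpr hk))
            · rw [hfk]; exact hex.choose_spec.2.1
            · rw [hfk]; exact hex.choose_spec.2.2
        · left
          have h1 : y N k = x N := by
            simp only [hydef]
            split
            · have : k = N := le_antisymm ‹_› hk
              rw [this]
            · rfl
          have h2 : y N (k + 1) = x N := by
            simp only [hydef]
            split
            · have : k + 1 = N := le_antisymm ‹_› (by omega)
              rw [this]
            · rfl
          rw [h1, h2]
    have hten : Tendsto y atTop (nhds x) := by
      rw [tendsto_pi_nhds]
      intro k
      apply Tendsto.congr' (f₁ := fun _ => x k)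
      · filter_upwards [eventually_ge_atTop k] with N hN
        simp only [hydef, if_pos hN]
      · exact tendsto_const_nhds
    exact mem_closure_of_tendsto hten (Eventually.of_forall hy)
  · -- ⊇ : the full comb set is closed and contains each finite one
    intro x hx
    obtain ⟨u, hu_mem, hu_lim⟩ := mem_closure_iff_seq_limit.mp hx
    have huk : ∀ k, Tendsto (fun n => u n k) atTop (nhds (x k)) :=
      tendsto_pi_nhds.mp hu_lim
    -- coordinates in [0,1]
    have hbd : ∀ n k, u n k ∈ Set.Icc (0 : ℝ) 1 := by
      intro n k
      obtain ⟨s, ⟨m, hs⟩, hns⟩ := hu_mem n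
      simp only at hs
      obtain ⟨t, ht, hnt⟩ := by rw [← hs] at hns; exact hns
      simp only [Set.mem_range] at ht
      obtain ⟨hm, rfl⟩ := ht
      exact hnt.1 k
    constructor
    · intro k
      exact isClosed_Icc.mem_of_tendsto (huk k) (Eventually.of_forall fun n => hbd n k)
    · intro k
      by_cases hxe : x k = x (k + 1)
      · exact Or.inl hxe
      · right
        set ε : ℝ := |x (k + 1) - x k| with hεdef
        have hε : 0 < ε := abs_pos.mpr (sub_ne_zero.mpr fun h => hxe h.symm)
        -- eventually b n - a n < ε/2
        have hM' : ∀ᶠ n in atTop, b n - a n < ε / 2 := by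
          have := hlim.eventually (gt_mem_nhds (show (0:ℝ) < ε / 2 by positivity))
          exact this
        obtain ⟨M, hM⟩ := eventually_atTop.mp hM'
        -- eventually close in coordinates k and k+1
        have e1 : ∀ᶠ n in atTop, |u n k - x k| < ε / 4 := by
          have := (huk k).eventually (Metric.ball_mem_nhds (x k)
            (show (0:ℝ) < ε / 4 by positivity))
          filter_upwards [this] with n hn
          simpa [Real.dist_eq] using hn
        have e2 : ∀ᶠ n in atTop, |u n (k + 1) - x (k + 1)| < ε / 4 := by
          have := (huk (k + 1)).eventually (Metric.ball_mem_nhds (x (k + 1))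
            (show (0:ℝ) < ε / 4 by positivity))
          filter_upwards [this] with n hn
          simpa [Real.dist_eq] using hn
        -- eventually there is a witness j < M
        have hP : ∀ᶠ n in atTop, ∃ j, 1 ≤ j ∧ j < M ∧
            u n (k + 1) ∈ Set.Icc (a j) (b j) ∧ u n k = a j := by
          filter_upwards [e1, e2] with n hn1 hn2
          obtain ⟨s, ⟨m, hs⟩, hns⟩ := hu_mem n
          simp only at hs
          obtain ⟨t, ht, hnt⟩ := by rw [← hs] at hns; exact hns
          simp only [Set.mem_range] at ht
          obtain ⟨hm, rfl⟩ := ht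
          rcases hnt.2 k with h | h
          · exfalso
            have : |u n (k + 1) - u n k| ≥ ε - (ε / 4 + ε / 4) := by
              have : x (k + 1) - x k =
                  (x (k + 1) - u n (k + 1)) + (u n (k + 1) - u n k) + (u n k - x k) := by ring
              have habs := abs_sub_abs_le_abs_sub (x (k + 1) - x k) ((x (k+1) - u n (k+1)) + (u n k - x k))
              have h2 : x (k + 1) - x k - ((x (k+1) - u n (k+1)) + (u n k - x k)) = u n (k+1) - u n k := by ring
              rw [h2] at habs
              have h3 : |(x (k+1) - u n (k+1)) + (u n k - x k)| ≤ ε / 4 + ε / 4 := by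
                calc |(x (k+1) - u n (k+1)) + (u n k - x k)|
                    ≤ |x (k+1) - u n (k+1)| + |u n k - x k| := abs_add_le _ _
                  _ ≤ ε / 4 + ε / 4 := by
                      rw [abs_sub_comm (x (k+1))]
                      exact add_le_add hn2.le hn1.le
              linarith [habs]
            rw [h] at this
            simp at this
            linarith
          · obtain ⟨i, ⟨hi1, _⟩, hIcc, heq⟩ := h
            refine ⟨i, hi1, ?_, hIcc, heq⟩
            -- show i < M
            by_contra hiM
            push_neg at hiM
            have hba : b i - a i < ε / 2 := hM i hiM
            have hge : u n (k + 1) - u n k ≥ ε / 2 := by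
              have hnn : u n (k + 1) - u n k ≥ 0 := by
                rw [heq]; linarith [hIcc.1]
              have : |u n (k + 1) - u n k| ≥ ε / 2 := by
                have habs := abs_sub_abs_le_abs_sub (x (k + 1) - x k) ((x (k+1) - u n (k+1)) + (u n k - x k))
                have h2 : x (k + 1) - x k - ((x (k+1) - u n (k+1)) + (u n k - x k)) = u n (k+1) - u n k := by ring
                rw [h2] at habs
                have h3 : |(x (k+1) - u n (k+1)) + (u n k - x k)| ≤ ε / 4 + ε / 4 := by
                  calc |(x (k+1) - u n (k+1)) + (u n k - x k)|
                      ≤ |x (k+1) - u n (k+1)| + |u n k - x k| := abs_add_le _ _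
                    _ ≤ ε / 4 + ε / 4 := by
                        rw [abs_sub_comm (x (k+1))]
                        exact add_le_add hn2.le hn1.le
                linarith [habs]
              rwa [abs_of_nonneg hnn] at this
            have : b i - a i ≥ ε / 2 := by
              rw [heq] at hge
              linarith [hIcc.2]
            linarith
        -- pigeonhole: some j works frequently
        have hfreq : ∃ j, ∃ᶠ n in atTop, 1 ≤ j ∧ j < M ∧
            u n (k + 1) ∈ Set.Icc (a j) (b j) ∧ u n k = a j := by
          by_contra hcon
          simp only [not_exists] at hcon
          simp only [not_frequently] at hcon
          have hall : ∀ᶠ n in atTop, ∀ j ∈ Finset.range M,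
              ¬(1 ≤ j ∧ j < M ∧ u n (k + 1) ∈ Set.Icc (a j) (b j) ∧ u n k = a j) := by
            rw [eventually_all_finset]
            intro j _
            exact hcon j
          obtain ⟨n, hn1, hn2⟩ := (hP.and hall).exists
          obtain ⟨j, hj⟩ := hn1
          exact hn2 j (Finset.mem_range.mpr hj.2.1) hj
        obtain ⟨j, hj⟩ := hfreq
        have hj1 : 1 ≤ j := by
          obtain ⟨n, hn⟩ := hj.exists
          exact hn.1
        -- pass to limit along the frequent set
        have hxk : x k = a j := by
          apply tendsto_nhds_unique_of_frequently_eq (huk k) tendsto_const_nhds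
          exact hj.mono fun n hn => hn.2.2.2
        have hxk1 : x (k + 1) ∈ Set.Icc (a j) (b j) := by
          apply isClosed_Icc.mem_of_frequently_of_tendsto ?_ (huk (k + 1))
          exact hj.mono fun n hn => hn.2.2.1
        exact ⟨j, hj1, hxk1, hxk⟩
end

section
/- Let A be a countable set and X ⊆ A^ℕ a nonempty shift-invariant set of sequences. For finite words α = α_1⋯α_n and β = β_1⋯β_m over A, write S_α = S_{α_1}⋯S_{α_n} (with S_∅ = 1) and β⌢y for the sequence obtained by prepending β to y ∈ A^ℕ. Then S_β S_α* S_α S_β* = P_{C(α,β)}, where C(α,β) = { x ∈ X : there exists y ∈ A^ℕ with x = β⌢y and α⌢y ∈ X }. In particular S_α* S_α = P_{F_α} with F_α = {y ∈ X : α⌢y ∈ X}, S_β S_β* = P_{Z_β} with Z_β = {β⌢y : β⌢y ∈ X}, and S_α S_β = 0 whenever the concatenated word αβ is not an initial segment of any element of X. -/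
open ContinuousLinearMap
open scoped Classical

/-- Prepend a letter to a sequence. -/
def consSeq {A : Type*} (a : A) (x : ℕ → A) : ℕ → A :=
  fun n => Nat.casesOn n a x

/-- Prepend a finite word to a sequence. -/
def consWord {A : Type*} (w : List A) (x : ℕ → A) : ℕ → A :=
  w.foldr consSeq x

/-- `S_α = S_{α₁} ⋯ S_{αₙ}`, with `S_∅ = 1`. -/
def opWord {H : Type*} [NormedAddCommGroup H] [NormedSpace ℂ H] {A : Type*}
    (S : A → H →L[ℂ] H) (w : List A) : H →L[ℂ] H :=
  w.foldr (fun a T => (S a).comp T) (ContinuousLinearMap.id ℂ H)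

lemma consWord_apply_add {A : Type*} (w : List A) (y : ℕ → A) (n : ℕ) :
    consWord w y (n + w.length) = y n := by
  induction w with
  | nil => rfl
  | cons a t ih =>
      show consSeq a (consWord t y) ((n + t.length) + 1) = y n
      exact ih

lemma eq_tail {A : Type*} {w : List A} {y x : ℕ → A} (h : x = consWord w y) :
    y = fun n => x (n + w.length) := by
  funext n
  rw [h, consWord_apply_add]

lemma tail_mem {A : Type*} {X : Set (ℕ → A)}
    (hshift : ∀ x ∈ X, (fun n => x (n + 1)) ∈ X) (k : ℕ) :
    ∀ x ∈ X, (fun n => x (n + k)) ∈ X := by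
  induction k with
  | zero => intro x hx; exact hx
  | succ k ih =>
      intro x hx
      exact ih _ (hshift x hx)

lemma consWord_append {A : Type*} (w w' : List A) (y : ℕ → A) :
    consWord (w ++ w') y = consWord w (consWord w' y) := by
  simp [consWord, List.foldr_append]

lemma lp2_ext_clm {ι : Type*} [DecidableEq ι] {T T' : lp (fun _ : ι => ℂ) 2 →L[ℂ] lp (fun _ : ι => ℂ) 2}
    (h : ∀ i, T (lp.single 2 i 1) = T' (lp.single 2 i 1)) : T = T' := by
  refine ContinuousLinearMap.ext fun f => ?_
  have hf := lp.hasSum_single (E := fun _ : ι => ℂ) ENNReal.ofNat_ne_top f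
  have hsm : ∀ i, lp.single 2 i (f i) = f i • lp.single (E := fun _ : ι => ℂ) 2 i (1 : ℂ) := by
    intro i
    rw [← lp.single_smul (E := fun _ : ι => ℂ), smul_eq_mul, mul_one]
  have h1 : HasSum (fun i => f i • T (lp.single 2 i 1)) (T f) := by
    have := hf.mapL T
    simpa only [hsm, map_smul] using this
  have h2 : HasSum (fun i => f i • T' (lp.single 2 i 1)) (T' f) := by
    have := hf.mapL T'
    simpa only [hsm, map_smul] using this
  refine h1.unique ?_
  simpa only [h] using h2

lemma lp2_apply_eq_inner {ι : Type*} [DecidableEq ι] (f : lp (fun _ : ι => ℂ) 2) (i : ι) :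
    f i = @inner ℂ _ _ (lp.single (E := fun _ : ι => ℂ) 2 i (1:ℂ)) f := by
  rw [lp.inner_single_left]
  simp [RCLike.inner_apply]

lemma lp2_single_apply {ι : Type*} [DecidableEq ι] (x z : ι) :
    (lp.single (E := fun _ : ι => ℂ) 2 x (1:ℂ)) z = if z = x then 1 else 0 := by
  rw [lp.single_apply]
  by_cases h : z = x
  · subst h; simp
  · simp [h]

theorem stmt15 {A : Type*} [Countable A] (X : Set (ℕ → A)) (hne : X.Nonempty)
    (hshift : ∀ x ∈ X, (fun n => x (n + 1)) ∈ X)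
    (S : A → lp (fun _ : ↥X => ℂ) 2 →L[ℂ] lp (fun _ : ↥X => ℂ) 2)
    (P : Set ↥X → (lp (fun _ : ↥X => ℂ) 2 →L[ℂ] lp (fun _ : ↥X => ℂ) 2))
    (hS : ∀ (a : A) (x : ↥X), S a (lp.single 2 x 1) =
      if h : consSeq a ↑x ∈ X then lp.single 2 (⟨consSeq a ↑x, h⟩ : ↥X) 1 else 0)
    (hP : ∀ (Q : Set ↥X) (x : ↥X),
      P Q (lp.single 2 x 1) = if x ∈ Q then lp.single 2 x 1 else 0) :
    (∀ α β : List A,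
      (opWord S β).comp (((adjoint (opWord S α)).comp (opWord S α)).comp
          (adjoint (opWord S β))) =
        P {x : ↥X | ∃ y : ℕ → A, (x : ℕ → A) = consWord β y ∧ consWord α y ∈ X}) ∧
    (∀ α : List A,
      (adjoint (opWord S α)).comp (opWord S α) = P {y : ↥X | consWord α ↑y ∈ X}) ∧
    (∀ β : List A,
      (opWord S β).comp (adjoint (opWord S β)) =
        P {x : ↥X | ∃ y : ℕ → A, (x : ℕ → A) = consWord β y}) ∧
    (∀ α β : List A, (¬ ∃ y : ℕ → A, consWord (α ++ β) y ∈ X) →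
      (opWord S α).comp (opWord S β) = 0) := by
  -- value of `S_w` on basis vectors
  have hSw : ∀ (w : List A) (v : ℕ → A) (hv : v ∈ X),
      opWord S w (lp.single 2 (⟨v, hv⟩ : ↥X) 1) =
        if h : consWord w v ∈ X then lp.single 2 (⟨consWord w v, h⟩ : ↥X) 1 else 0 := by
    intro w
    induction w with
    | nil =>
        intro v hv
        rw [dif_pos (show consWord [] v ∈ X from hv)]
        rfl
    | cons a t ih =>
        intro v hv
        have hc : opWord S (a :: t) (lp.single 2 (⟨v, hv⟩ : ↥X) 1) =
            S a (opWord S t (lp.single 2 (⟨v, hv⟩ : ↥X) 1)) := rfl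
        rw [hc, ih v hv]
        by_cases h : consWord t v ∈ X
        · rw [dif_pos h, hS a ⟨consWord t v, h⟩]
          rfl
        · rw [dif_neg h, map_zero, dif_neg]
          intro hm
          exact h (hshift _ hm)
  -- coordinates of `S_w†` on basis vectors
  have hAcoord : ∀ (w : List A) (x z : ↥X),
      (adjoint (opWord S w) (lp.single 2 x 1)) z
        = if (x : ℕ → A) = consWord w ↑z then 1 else 0 := by
    intro w x z
    rw [lp2_apply_eq_inner, adjoint_inner_right, hSw w ↑z z.2]
    by_cases h : consWord w ↑z ∈ X
    · rw [dif_pos h, lp.inner_single_left]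
      simp only [RCLike.inner_apply, map_one, one_mul, mul_one]
      rw [lp2_single_apply]
      by_cases hx : (x : ℕ → A) = consWord w ↑z
      · rw [if_pos (Subtype.ext hx.symm), if_pos hx]
      · rw [if_neg hx, if_neg]
        intro hxz
        exact hx (congrArg Subtype.val hxz).symm
    · rw [dif_neg h, inner_zero_left, if_neg]
      intro he
      exact h (he ▸ x.2)
  -- value of `S_w†` on basis vectors
  have hAw : ∀ (w : List A) (v : ℕ → A) (hv : v ∈ X),
      adjoint (opWord S w) (lp.single 2 (⟨v, hv⟩ : ↥X) 1) =
        if _ : ∃ y : ℕ → A, v = consWord w y then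
          lp.single 2 (⟨fun n => v (n + w.length), tail_mem hshift w.length v hv⟩ : ↥X) 1
        else 0 := by
    intro w v hv
    by_cases h : ∃ y : ℕ → A, v = consWord w y
    · rw [dif_pos h]
      apply lp.ext; funext z
      rw [hAcoord w ⟨v, hv⟩ z, lp2_single_apply]
      by_cases hz : v = consWord w ↑z
      · rw [if_pos hz, if_pos (Subtype.ext (eq_tail hz))]
      · rw [if_neg hz, if_neg]
        intro hzz
        apply hz
        obtain ⟨y, hy⟩ := h
        have h1 : (z : ℕ → A) = fun n => v (n + w.length) := congrArg Subtype.val hzz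
        rw [h1, ← eq_tail hy]
        exact hy
    · rw [dif_neg h]
      apply lp.ext; funext z
      rw [hAcoord w ⟨v, hv⟩ z, if_neg (fun hz => h ⟨↑z, hz⟩)]
      rfl
  -- value of `S_w† S_w` on basis vectors
  have hQ1 : ∀ (w : List A) (y : ↥X),
      ((adjoint (opWord S w)).comp (opWord S w)) (lp.single 2 y 1) =
        if consWord w ↑y ∈ X then lp.single 2 y 1 else 0 := by
    intro w y
    rw [comp_apply, hSw w ↑y y.2]
    by_cases h : consWord w ↑y ∈ X
    · rw [dif_pos h, hAw w (consWord w ↑y) h,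
        dif_pos ⟨(y : ℕ → A), rfl⟩, if_pos h]
      congr 1
      apply Subtype.ext
      funext n
      exact consWord_apply_add w ↑y n
    · rw [dif_neg h, map_zero, if_neg h]
  refine ⟨?_, ?_, ?_, ?_⟩
  · -- main identity
    intro α β
    apply lp2_ext_clm
    intro x
    rw [hP, comp_apply, comp_apply, hAw β ↑x x.2]
    by_cases h : ∃ y : ℕ → A, (x : ℕ → A) = consWord β y
    · rw [dif_pos h, hQ1]
      obtain ⟨y, hy⟩ := h
      have hx : consWord β (fun n => (x : ℕ → A) (n + β.length)) = ↑x := by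
        rw [← eq_tail hy, ← hy]
      by_cases hα : consWord α (fun n => (x : ℕ → A) (n + β.length)) ∈ X
      · rw [if_pos hα,
          hSw β (fun n => (x : ℕ → A) (n + β.length)) (tail_mem hshift β.length ↑x x.2),
          dif_pos (show consWord β (fun n => (x : ℕ → A) (n + β.length)) ∈ X by
            rw [hx]; exact x.2),
          if_pos (show x ∈ {x : ↥X | ∃ y : ℕ → A, (x : ℕ → A) = consWord β y ∧
            consWord α y ∈ X} from ⟨_, hx.symm, hα⟩)]
        congr 1
        exact Subtype.ext hx
      · rw [if_neg hα, map_zero, if_neg]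
        rintro ⟨y', hy', hαy'⟩
        exact hα ((eq_tail hy') ▸ hαy')
    · rw [dif_neg h, map_zero, map_zero, if_neg]
      rintro ⟨y, hy, -⟩
      exact h ⟨y, hy⟩
  · -- S_α† S_α = P
    intro α
    apply lp2_ext_clm
    intro y
    rw [hQ1, hP]
    rfl
  · -- S_β S_β† = P
    intro β
    apply lp2_ext_clm
    intro x
    rw [hP, comp_apply, hAw β ↑x x.2]
    by_cases h : ∃ y : ℕ → A, (x : ℕ → A) = consWord β y
    · rw [dif_pos h]
      obtain ⟨y, hy⟩ := h
      have hx : consWord β (fun n => (x : ℕ → A) (n + β.length)) = ↑x := by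
        rw [← eq_tail hy, ← hy]
      rw [hSw β (fun n => (x : ℕ → A) (n + β.length)) (tail_mem hshift β.length ↑x x.2),
        dif_pos (show consWord β (fun n => (x : ℕ → A) (n + β.length)) ∈ X by
          rw [hx]; exact x.2),
        if_pos (show x ∈ {x : ↥X | ∃ y : ℕ → A, (x : ℕ → A) = consWord β y} from ⟨y, hy⟩)]
      congr 1
      exact Subtype.ext hx
    · have hx : x ∉ {x : ↥X | ∃ y : ℕ → A, (x : ℕ → A) = consWord β y} := h
      rw [dif_neg h, map_zero, if_neg hx]
  · -- S_α S_β = 0 when α ++ β is not a prefix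
    intro α β hnone
    apply lp2_ext_clm
    intro x
    rw [comp_apply, hSw β ↑x x.2]
    by_cases hβ : consWord β ↑x ∈ X
    · rw [dif_pos hβ, hSw α (consWord β ↑x) hβ, dif_neg, zero_apply]
      intro hm
      exact hnone ⟨↑x, by rw [consWord_append]; exact hm⟩
    · rw [dif_neg hβ, map_zero, zero_apply]
end

section
/- Let K be an algebraically closed field, complete with respect to a nontrivial non-Archimedean absolute value. Define d(ξ, ξ') = 2·diam(ξ ∨ ξ') − diam(ξ) − diam(ξ') for ξ, ξ' ∈ 𝔸¹_Berk(K), where ξ ∨ ξ' is the least upper bound of ξ and ξ' for the pointwise partial order. Then d is a metric on 𝔸¹_Berk(K): d(ξ,ξ') ≥ 0 with equality iff ξ = ξ', d is symmetric, and d satisfies the triangle inequality. -/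
open Polynomial

/-- A non-Archimedean absolute value on a field `K`. -/
def IsNonarchAbs {K : Type*} [Field K] (abv : K → ℝ) : Prop :=
  (∀ x, 0 ≤ abv x) ∧ (∀ x, abv x = 0 ↔ x = 0) ∧
  (∀ x y, abv (x * y) = abv x * abv y) ∧
  (∀ x y, abv (x + y) ≤ max (abv x) (abv y))

/-- A multiplicative seminorm on `K[X]` extending the absolute value `abv`. -/
def IsMultSeminorm {K : Type*} [Field K] (abv : K → ℝ) (N : Polynomial K → ℝ) : Prop :=
  (∀ f, 0 ≤ N f) ∧ (∀ c : K, N (C c) = abv c) ∧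
  (∀ f g, N (f + g) ≤ N f + N g) ∧ (∀ f g, N (f * g) = N f * N g)

/-- The diameter of a point of the Berkovich line: `diam ξ = inf {‖X - c‖_ξ : c ∈ K}`. -/
noncomputable def diamB {K : Type*} [Field K] (N : Polynomial K → ℝ) : ℝ :=
  ⨅ c : K, N (X - C c)

/-- The pointwise partial order on seminorms. -/
def BerkLE {K : Type*} [Field K] (N N' : Polynomial K → ℝ) : Prop :=
  ∀ f, N f ≤ N' f

/-- `Z` is the least upper bound `N ∨ N'` of the seminorms `N, N'`. -/
def IsBerkJoin {K : Type*} [Field K] (abv : K → ℝ) (N N' Z : Polynomial K → ℝ) : Prop :=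
  IsMultSeminorm abv Z ∧ BerkLE N Z ∧ BerkLE N' Z ∧
    ∀ W, IsMultSeminorm abv W → BerkLE N W → BerkLE N' W → BerkLE Z W

/-- The value `d(ξ,ξ') = 2 diam(ξ ∨ ξ') - diam ξ - diam ξ'`, where `Z = ξ ∨ ξ'`. -/
noncomputable def smallDist {K : Type*} [Field K] (N N' Z : Polynomial K → ℝ) : ℝ :=
  2 * diamB Z - diamB N - diamB N'

section Aux
variable {K : Type*} [Field K] {abv : K → ℝ} {N N' Z : Polynomial K → ℝ}

lemma abv_one' (h : IsNonarchAbs abv) : abv 1 = 1 := by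
  have h1 := h.2.2.1 1 1
  have h0 : abv 1 ≠ 0 := by simpa using (h.2.1 1).not.mpr one_ne_zero
  rw [mul_one] at h1
  have := mul_left_cancel₀ h0 (by linarith : abv 1 * 1 = abv 1 * abv 1)
  linarith

lemma abv_neg_one (h : IsNonarchAbs abv) : abv (-1) = 1 := by
  have h1 := h.2.2.1 (-1) (-1)
  rw [neg_mul_neg, one_mul, abv_one' h] at h1
  nlinarith [h.1 (-1)]

lemma abv_nat_le_one (h : IsNonarchAbs abv) (n : ℕ) : abv (n : K) ≤ 1 := by
  induction n with
  | zero => simp [(h.2.1 0).mpr rfl]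
  | succ k ih =>
    push_cast
    exact (h.2.2.2 _ _).trans (by simp [ih, abv_one' h])

lemma ms_zero (hN : IsMultSeminorm abv N) (h : IsNonarchAbs abv) : N 0 = 0 := by
  have := hN.2.1 0
  simpa [(h.2.1 0).mpr rfl] using this

lemma ms_one (hN : IsMultSeminorm abv N) (h : IsNonarchAbs abv) : N 1 = 1 := by
  have := hN.2.1 1
  simpa [abv_one' h] using this

lemma ms_pow (hN : IsMultSeminorm abv N) (h : IsNonarchAbs abv) (f : Polynomial K) (n : ℕ) :
    N (f ^ n) = N f ^ n := by
  induction n with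
  | zero => simpa using ms_one hN h
  | succ k ih => rw [pow_succ, pow_succ, hN.2.2.2, ih]

lemma ms_sum (hN : IsMultSeminorm abv N) {ι : Type*} (s : Finset ι) (F : ι → Polynomial K)
    (h : IsNonarchAbs abv) : N (∑ i ∈ s, F i) ≤ ∑ i ∈ s, N (F i) := by
  classical
  induction s using Finset.induction with
  | empty => simp [ms_zero hN h]
  | insert _ _ hx ih =>
    rw [Finset.sum_insert hx, Finset.sum_insert hx]
    exact (hN.2.2.1 _ _).trans (by linarith)

lemma le_one_of_pow_le {t : ℝ} (ht : 0 ≤ t) (h : ∀ n : ℕ, t ^ n ≤ n + 1) : t ≤ 1 := by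
  by_contra ht1
  push_neg at ht1
  obtain ⟨m, hm⟩ := pow_unbounded_of_one_lt (2 : ℝ) ht1
  set n : ℕ := 2 * m + 1 with hn
  have h1 : t ^ (2 * m * n) ≤ 2 * m * n + 1 := by
    have := h (2 * m * n); push_cast at this; exact_mod_cast this
  have h2 : ((2:ℝ) ^ n) ^ 2 ≤ t ^ (2 * m * n) := by
    have he : t ^ (2 * m * n) = ((t ^ m) ^ 2) ^ n := by
      rw [← pow_mul, ← pow_mul]; ring_nf
    have h2' : ((2:ℝ) ^ 2) ^ n ≤ ((t ^ m) ^ 2) ^ n := by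
      apply pow_le_pow_left₀ (by positivity)
      nlinarith [hm]
    rw [he, ← pow_mul, ← pow_mul, mul_comm 2 n] at *
    linarith [h2']
  have h3 : (1 + (n:ℝ)) ≤ 2 ^ n := by
    have := one_add_mul_le_pow (by norm_num : (-2:ℝ) ≤ 1) n
    norm_num at this
    linarith
  have h4 : ((1:ℝ) + n) ^ 2 ≤ (2 ^ n) ^ 2 := by
    apply pow_le_pow_left₀ (by positivity) h3
  have hncast : (n:ℝ) = 2 * m + 1 := by rw [hn]; push_cast; ring
  nlinarith [h1, h2, h4]

lemma ms_nonarch (h : IsNonarchAbs abv) (hN : IsMultSeminorm abv N) (f g : Polynomial K) :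
    N (f + g) ≤ max (N f) (N g) := by
  set M := max (N f) (N g) with hM
  have hM0 : 0 ≤ M := le_max_of_le_left (hN.1 f)
  have key : ∀ n : ℕ, N (f + g) ^ n ≤ (n + 1) * M ^ n := by
    intro n
    rw [← ms_pow hN h, add_pow]
    refine (ms_sum hN _ _ h).trans ?_
    have hterm : ∀ k ∈ Finset.range (n + 1),
        N (f ^ k * g ^ (n - k) * (n.choose k : Polynomial K)) ≤ M ^ n := by
      intro k hk
      rw [Finset.mem_range] at hk
      have hc : ((n.choose k : ℕ) : Polynomial K) = C ((n.choose k : ℕ) : K) := by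
        push_cast; simp
      rw [hN.2.2.2, hN.2.2.2, hc, hN.2.1, ms_pow hN h, ms_pow hN h]
      have h1 : N f ^ k ≤ M ^ k := pow_le_pow_left₀ (hN.1 f) (le_max_left _ _) k
      have h2 : N g ^ (n - k) ≤ M ^ (n - k) := pow_le_pow_left₀ (hN.1 g) (le_max_right _ _) _
      have h3 : abv ((n.choose k : ℕ) : K) ≤ 1 := abv_nat_le_one h _
      calc N f ^ k * N g ^ (n - k) * abv ((n.choose k : ℕ) : K)
          ≤ M ^ k * M ^ (n - k) * 1 := by
            apply mul_le_mul (mul_le_mul h1 h2 (pow_nonneg (hN.1 g) _) (pow_nonneg hM0 _))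
              h3 (h.1 _) (mul_nonneg (pow_nonneg hM0 _) (pow_nonneg hM0 _))
        _ = M ^ n := by rw [mul_one, ← pow_add, Nat.add_sub_cancel' (by omega)]
    calc ∑ k ∈ Finset.range (n + 1), N (f ^ k * g ^ (n - k) * (n.choose k : Polynomial K))
        ≤ ∑ _k ∈ Finset.range (n + 1), M ^ n := Finset.sum_le_sum hterm
      _ = (n + 1) * M ^ n := by rw [Finset.sum_const, Finset.card_range, nsmul_eq_mul]; push_cast; ring
  rcases eq_or_lt_of_le hM0 with hM0' | hM0'
  · have := key 1
    rw [← hM0'] at this ⊢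
    simp at this
    linarith [hN.1 (f + g), this]
  · have ht : ∀ n : ℕ, (N (f + g) / M) ^ n ≤ n + 1 := by
      intro n
      rw [div_pow, div_le_iff₀ (pow_pos hM0' n)]
      exact key n
    have := le_one_of_pow_le (div_nonneg (hN.1 _) hM0) ht
    rw [div_le_one hM0'] at this
    exact this

lemma ms_neg (h : IsNonarchAbs abv) (hN : IsMultSeminorm abv N) (f : Polynomial K) :
    N (-f) = N f := by
  have he : -f = C (-1) * f := by simp
  rw [he, hN.2.2.2, hN.2.1, abv_neg_one h, one_mul]

lemma ms_sub (h : IsNonarchAbs abv) (hN : IsMultSeminorm abv N) (f g : Polynomial K) :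
    N (f - g) ≤ max (N f) (N g) := by
  rw [sub_eq_add_neg]
  have := ms_nonarch h hN f (-g)
  rwa [ms_neg h hN] at this

lemma diamB_bdd (hN : IsMultSeminorm abv N) :
    BddBelow (Set.range fun c : K => N (X - C c)) :=
  ⟨0, by rintro x ⟨c, rfl⟩; exact hN.1 _⟩

lemma diamB_le (hN : IsMultSeminorm abv N) (c : K) : diamB N ≤ N (X - C c) :=
  ciInf_le (diamB_bdd hN) c

lemma diamB_nonneg (hN : IsMultSeminorm abv N) : 0 ≤ diamB N :=
  le_ciInf fun c => hN.1 _

lemma diamB_mono (hN : IsMultSeminorm abv N) (hle : BerkLE N N') : diamB N ≤ diamB N' :=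
  le_ciInf fun c => (diamB_le hN c).trans (hle _)

end Aux

section Aux2
variable {K : Type*} [Field K] {abv : K → ℝ} {M N N' Z Z₁ Z₂ : Polynomial K → ℝ}

lemma ms_multiset_prod (h : IsNonarchAbs abv) (hN : IsMultSeminorm abv N) (s : Multiset K) :
    N ((s.map fun a => X - C a).prod) = ((s.map fun a => N (X - C a)).prod) := by
  induction s using Multiset.induction with
  | empty => simpa using ms_one hN h
  | cons a s ih => simp [hN.2.2.2, ih]

lemma berkLE_of_linear [IsAlgClosed K] (h : IsNonarchAbs abv) (hN : IsMultSeminorm abv N)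
    (hN' : IsMultSeminorm abv N') (hlin : ∀ c : K, N (X - C c) ≤ N' (X - C c)) :
    BerkLE N N' := by
  intro f
  rcases eq_or_ne f 0 with rfl | hf
  · rw [ms_zero hN h, ms_zero hN' h]
  have hs : f = C f.leadingCoeff * (f.roots.map fun a => X - C a).prod :=
    (IsAlgClosed.splits f).eq_prod_roots
  rw [hs, hN.2.2.2, hN'.2.2.2, hN.2.1, hN'.2.1, ms_multiset_prod h hN, ms_multiset_prod h hN']
  apply mul_le_mul_of_nonneg_left _ (h.1 _)
  -- product of nonneg terms, termwise ≤
  induction f.roots using Multiset.induction with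
  | empty => simp
  | cons a s ih =>
    simp only [Multiset.map_cons, Multiset.prod_cons]
    apply mul_le_mul (hlin a) ih _ (hN'.1 _)
    · refine Multiset.prod_nonneg ?_
      intro x hx
      obtain ⟨b, _, rfl⟩ := Multiset.mem_map.mp hx
      exact hN.1 _

lemma berk_eq_of_linear [IsAlgClosed K] (h : IsNonarchAbs abv) (hN : IsMultSeminorm abv N)
    (hN' : IsMultSeminorm abv N') (hlin : ∀ c : K, N (X - C c) = N' (X - C c)) :
    N = N' :=
  funext fun f => le_antisymm
    (berkLE_of_linear h hN hN' (fun c => (hlin c).le) f)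
    (berkLE_of_linear h hN' hN (fun c => (hlin c).ge) f)

/-- Key lemma: if `M ≤ Z` then `Z(X-c) ≤ max (M(X-c)) (diam Z)`. -/
lemma key_lemma (h : IsNonarchAbs abv) (hM : IsMultSeminorm abv M) (hZ : IsMultSeminorm abv Z)
    (hMZ : BerkLE M Z) (c : K) : Z (X - C c) ≤ max (M (X - C c)) (diamB Z) := by
  by_contra hcon
  push_neg at hcon
  rw [max_lt_iff] at hcon
  obtain ⟨h1, h2⟩ := hcon
  obtain ⟨a, ha⟩ : ∃ a : K, Z (X - C a) < Z (X - C c) := exists_lt_of_ciInf_lt h2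
  -- abv (a - c) = Z (X - C c)
  have e1 : C (a - c) = (X - C c) - (X - C a) := by rw [map_sub]; ring
  have habv1 : abv (a - c) ≤ Z (X - C c) := by
    rw [← hZ.2.1, e1]
    exact (ms_sub h hZ _ _).trans (by rw [max_le_iff]; exact ⟨le_refl _, ha.le⟩)
  have e2 : (X - C c) = (X - C a) + C (a - c) := by rw [map_sub]; ring
  have habv2 : Z (X - C c) ≤ abv (a - c) := by
    have := ms_nonarch h hZ (X - C a) (C (a - c))
    rw [← e2, hZ.2.1] at this
    rcases max_cases (Z (X - C a)) (abv (a - c)) with ⟨he, _⟩ | ⟨he, _⟩ <;> rw [he] at this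
    · linarith
    · exact this
  -- abv (a - c) ≤ M (X - C c)
  have hMa : M (X - C a) < abv (a - c) := lt_of_le_of_lt (hMZ _) (lt_of_lt_of_le ha habv2)
  have habv3 : abv (a - c) ≤ M (X - C c) := by
    have := ms_sub h hM (X - C c) (X - C a)
    rw [← e1, hM.2.1] at this
    rcases max_cases (M (X - C c)) (M (X - C a)) with ⟨he, _⟩ | ⟨he, _⟩ <;> rw [he] at this
    · exact this
    · linarith
  linarith [habv2.trans habv3]

/-- If `M ≤ Z` and `diam Z ≤ diam M` then `M = Z`. -/
lemma berk_eq_of_diam [IsAlgClosed K] (h : IsNonarchAbs abv) (hM : IsMultSeminorm abv M)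
    (hZ : IsMultSeminorm abv Z) (hMZ : BerkLE M Z) (hd : diamB Z ≤ diamB M) : M = Z := by
  apply berk_eq_of_linear h hM hZ
  intro c
  refine le_antisymm (hMZ _) ((key_lemma h hM hZ hMZ c).trans ?_)
  rw [max_le_iff]
  exact ⟨le_refl _, hd.trans (diamB_le hM c)⟩

/-- Points above a common point are comparable. -/
lemma berk_comparable [IsAlgClosed K] (h : IsNonarchAbs abv) (hN : IsMultSeminorm abv N)
    (hZ₁ : IsMultSeminorm abv Z₁) (hZ₂ : IsMultSeminorm abv Z₂)
    (h1 : BerkLE N Z₁) (h2 : BerkLE N Z₂) : BerkLE Z₁ Z₂ ∨ BerkLE Z₂ Z₁ := by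
  rcases le_total (diamB Z₁) (diamB Z₂) with hd | hd
  · left
    apply berkLE_of_linear h hZ₁ hZ₂
    intro c
    refine (key_lemma h hN hZ₁ h1 c).trans ?_
    rw [max_le_iff]
    exact ⟨(h2 _).trans (le_refl _), hd.trans (diamB_le hZ₂ c)⟩
  · right
    apply berkLE_of_linear h hZ₂ hZ₁
    intro c
    refine (key_lemma h hN hZ₂ h2 c).trans ?_
    rw [max_le_iff]
    exact ⟨(h1 _).trans (le_refl _), hd.trans (diamB_le hZ₁ c)⟩

end Aux2

/-- The small metric `d(ξ,ξ') = 2 diam(ξ ∨ ξ') - diam ξ - diam ξ'` is a metric on the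
Berkovich affine line: nonnegative, vanishing exactly on the diagonal, symmetric, and
satisfying the triangle inequality. -/
theorem stmt18 {K : Type*} [Field K] [IsAlgClosed K] (abv : K → ℝ)
    (habv : IsNonarchAbs abv)
    (hnontriv : ∃ x : K, abv x ≠ 0 ∧ abv x ≠ 1)
    (hcomplete : ∀ s : ℕ → K,
      (∀ ε : ℝ, 0 < ε → ∃ N, ∀ m ≥ N, ∀ n ≥ N, abv (s m - s n) < ε) →
      ∃ x : K, ∀ ε : ℝ, 0 < ε → ∃ N, ∀ n ≥ N, abv (s n - x) < ε) :
    (∀ N N' Z : Polynomial K → ℝ, IsMultSeminorm abv N → IsMultSeminorm abv N' →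
      IsBerkJoin abv N N' Z →
      0 ≤ smallDist N N' Z ∧ (smallDist N N' Z = 0 ↔ N = N')) ∧
    (∀ N N' Z Z' : Polynomial K → ℝ, IsMultSeminorm abv N → IsMultSeminorm abv N' →
      IsBerkJoin abv N N' Z → IsBerkJoin abv N' N Z' →
      smallDist N N' Z = smallDist N' N Z') ∧
    (∀ N₁ N₂ N₃ Z₁₂ Z₂₃ Z₁₃ : Polynomial K → ℝ,
      IsMultSeminorm abv N₁ → IsMultSeminorm abv N₂ → IsMultSeminorm abv N₃ →
      IsBerkJoin abv N₁ N₂ Z₁₂ → IsBerkJoin abv N₂ N₃ Z₂₃ → IsBerkJoin abv N₁ N₃ Z₁₃ →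
      smallDist N₁ N₃ Z₁₃ ≤ smallDist N₁ N₂ Z₁₂ + smallDist N₂ N₃ Z₂₃) := by
  clear hnontriv hcomplete
  refine ⟨?_, ?_, ?_⟩
  · intro N N' Z hN hN' hJ
    obtain ⟨hZ, hNZ, hN'Z, hleast⟩ := hJ
    have d1 : diamB N ≤ diamB Z := diamB_mono hN hNZ
    have d2 : diamB N' ≤ diamB Z := diamB_mono hN' hN'Z
    refine ⟨by unfold smallDist; linarith, ?_, ?_⟩
    · intro h0
      unfold smallDist at h0
      have e1 : diamB Z ≤ diamB N := by linarith
      have e2 : diamB Z ≤ diamB N' := by linarith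
      have hq1 := berk_eq_of_diam habv hN hZ hNZ e1
      have hq2 := berk_eq_of_diam habv hN' hZ hN'Z e2
      rw [hq1, hq2]
    · rintro rfl
      have hZN : BerkLE Z N := hleast N hN (fun f => le_refl _) (fun f => le_refl _)
      have hq : Z = N := funext fun f => le_antisymm (hZN f) (hNZ f)
      unfold smallDist; rw [hq]; ring
  · intro N N' Z Z' hN hN' hJ hJ'
    have h1 : BerkLE Z Z' := hJ.2.2.2 Z' hJ'.1 hJ'.2.2.1 hJ'.2.1
    have h2 : BerkLE Z' Z := hJ'.2.2.2 Z hJ.1 hJ.2.2.1 hJ.2.1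
    have hq : Z = Z' := funext fun f => le_antisymm (h1 f) (h2 f)
    unfold smallDist; rw [hq]; ring
  · intro N₁ N₂ N₃ Z₁₂ Z₂₃ Z₁₃ h1 h2 h3 hJ12 hJ23 hJ13
    rcases berk_comparable habv h2 hJ12.1 hJ23.1 hJ12.2.2.1 hJ23.2.1 with hc | hc
    · have hN1 : BerkLE N₁ Z₂₃ := fun f => (hJ12.2.1 f).trans (hc f)
      have hZ : BerkLE Z₁₃ Z₂₃ := hJ13.2.2.2 _ hJ23.1 hN1 hJ23.2.2.1
      have d13 : diamB Z₁₃ ≤ diamB Z₂₃ := diamB_mono hJ13.1 hZ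
      have dN2 : diamB N₂ ≤ diamB Z₁₂ := diamB_mono h2 hJ12.2.2.1
      unfold smallDist; linarith
    · have hN3 : BerkLE N₃ Z₁₂ := fun f => (hJ23.2.2.1 f).trans (hc f)
      have hZ : BerkLE Z₁₃ Z₁₂ := hJ13.2.2.2 _ hJ12.1 hJ12.2.1 hN3
      have d13 : diamB Z₁₃ ≤ diamB Z₁₂ := diamB_mono hJ13.1 hZ
      have dN2 : diamB N₂ ≤ diamB Z₂₃ := diamB_mono h2 hJ23.2.1
      unfold smallDist; linarith
end
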